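/- In any Nash equilibrium of the imbalanced (m,3)-RPS in which at most one player assigns positive probability to S, that player (call them q_s) assigns zero probability to R; moreover if q_s plays the pure strategy S, then the profile is not a Nash equilibrium. -/
import Mathlib


/-- Objects: `0 = R`, `1 = P`, `2 = S`. The winning object for a profile of
choices in the imbalanced `(m,3)`-RPS: any multiset containing at least one `S`
and one `R` is a win for `R`; any multiset of only `R` and `P` is a win for `P`
(an all-`R` multiset is an all-way tie, won by `R`); any multiset of only `P`
and `S` is a win for `S`. -/
def imbWinner {m : ℕ} (c : Fin m → Fin 3) : Fin 3 :=
  if (∃ i, c i = 0) ∧ (∃ i, c i = 2) then 0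
  else if (∃ i, c i = 0) ∧ (∃ i, c i = 1) then 1
  else if (∃ i, c i = 0) then 0
  else if (∃ i, c i = 2) then 2
  else 1

/-- Payoff to player `j`: winners in an `m'`-way tie receive `(m - m')/m'`,
losers receive `-1`. -/
noncomputable def imbPayoff {m : ℕ} (c : Fin m → Fin 3) (j : Fin m) : ℝ :=
  let W : Finset (Fin m) := Finset.univ.filter (fun i => c i = imbWinner c)
  if c j = imbWinner c then ((m : ℝ) - W.card) / W.card else -1

/-- Expected payoff of player `j` when each player `i` uses mixed strategy `σ i`. -/
noncomputable def imbExpPayoff {m : ℕ} (σ : Fin m → Fin 3 → ℝ) (j : Fin m) : ℝ :=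
  ∑ c : Fin m → Fin 3, (∏ i, σ i (c i)) * imbPayoff c j

/-- `σ` is a profile of mixed strategies. -/
def IsMixedProfile {m : ℕ} (σ : Fin m → Fin 3 → ℝ) : Prop :=
  ∀ i, (∀ o, 0 ≤ σ i o) ∧ ∑ o, σ i o = 1

/-- `σ` is a Nash equilibrium: no unilateral deviation increases a player's
expected payoff. -/
noncomputable def IsNashEq {m : ℕ} (σ : Fin m → Fin 3 → ℝ) : Prop :=
  IsMixedProfile σ ∧
    ∀ j (τ : Fin 3 → ℝ), (∀ o, 0 ≤ τ o) → (∑ o, τ o = 1) →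
      imbExpPayoff (Function.update σ j τ) j ≤ imbExpPayoff σ j

namespace Imb
variable {m : ℕ}

def glue (j : Fin m) (a : Fin 3) (d : {i : Fin m // i ≠ j} → Fin 3) : Fin m → Fin 3 :=
  fun i => if h : i = j then a else d ⟨i, h⟩

@[simp] lemma glue_self {j : Fin m} {a : Fin 3} {d : {i : Fin m // i ≠ j} → Fin 3} :
    glue j a d j = a := by simp [glue]

lemma glue_ne {j : Fin m} {a : Fin 3} {d : {i : Fin m // i ≠ j} → Fin 3}
    {i : Fin m} (h : i ≠ j) : glue j a d i = d ⟨i, h⟩ := by simp [glue, h]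

def sp (j : Fin m) : (Fin m → Fin 3) ≃ Fin 3 × ({i : Fin m // i ≠ j} → Fin 3) where
  toFun c := (c j, fun i => c i.1)
  invFun p := glue j p.1 p.2
  left_inv c := by
    funext i
    by_cases h : i = j
    · subst h; simp [glue]
    · simp [glue, h]
  right_inv p := by
    refine Prod.ext (by simp) ?_
    funext i
    simp [glue, i.2]

noncomputable def F (σ : Fin m → Fin 3 → ℝ) (j : Fin m) (a : Fin 3) : ℝ :=
  ∑ d : {i : Fin m // i ≠ j} → Fin 3, (∏ i, σ i.1 (d i)) * imbPayoff (glue j a d) j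

lemma lin (σ : Fin m → Fin 3 → ℝ) (j : Fin m) (τ : Fin 3 → ℝ) :
    imbExpPayoff (Function.update σ j τ) j = ∑ a, τ a * F σ j a := by
  unfold imbExpPayoff F
  rw [← Equiv.sum_comp (sp j).symm
    (fun c => (∏ i, Function.update σ j τ i (c i)) * imbPayoff c j)]
  rw [Fintype.sum_prod_type]
  refine Finset.sum_congr rfl fun a _ => ?_
  rw [Finset.mul_sum]
  refine Finset.sum_congr rfl fun d _ => ?_
  have hsp : (sp j).symm (a, d) = glue j a d := rfl
  rw [hsp]
  have hprod : (∏ i, Function.update σ j τ i (glue j a d i))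
      = τ a * ∏ i : {i : Fin m // i ≠ j}, σ i.1 (d i) := by
    rw [← Finset.mul_prod_erase Finset.univ _ (Finset.mem_univ j)]
    congr 1
    · simp
    · rw [Finset.prod_subtype (Finset.univ.erase j) (p := fun i => i ≠ j) (by simp)]
      refine Finset.prod_congr rfl fun i _ => ?_
      rw [Function.update_of_ne i.2, glue_ne i.2]
  rw [hprod]; ring

lemma mass {σ : Fin m → Fin 3 → ℝ} (hprof : IsMixedProfile σ) (j : Fin m) :
    ∑ d : {i : Fin m // i ≠ j} → Fin 3, (∏ i, σ i.1 (d i)) = 1 := by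
  rw [← Fintype.prod_sum (fun (i : {i : Fin m // i ≠ j}) (a : Fin 3) => σ i.1 a)]
  exact Finset.prod_eq_one fun i _ => (hprof i.1).2

end Imb
namespace Imb
variable {m : ℕ}

lemma pureF (σ : Fin m → Fin 3 → ℝ) (j : Fin m) (a : Fin 3) :
    imbExpPayoff (Function.update σ j (fun o => if o = a then 1 else 0)) j = F σ j a := by
  rw [lin]
  simp [Finset.sum_ite_eq']

lemma key {σ : Fin m → Fin 3 → ℝ} (hne : IsNashEq σ) (j : Fin m) {a b : Fin 3}
    (hab : F σ j b < F σ j a) : σ j b = 0 := by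
  set V := imbExpPayoff σ j with hV
  have hself : V = ∑ x, σ j x * F σ j x := by
    have h1 := lin σ j (σ j)
    rwa [Function.update_eq_self] at h1
  have hF : ∀ x, F σ j x ≤ V := by
    intro x
    rw [← pureF σ j x]
    exact hne.2 j _ (fun o => by positivity) (by simp)
  by_contra hb
  have hbpos : 0 < σ j b := lt_of_le_of_ne ((hne.1 j).1 b) (Ne.symm hb)
  have hlt : ∑ x, σ j x * F σ j x < ∑ x, σ j x * V := by
    refine Finset.sum_lt_sum (fun x _ => ?_) ⟨b, Finset.mem_univ b, ?_⟩
    · exact mul_le_mul_of_nonneg_left (hF x) ((hne.1 j).1 x)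
    · exact mul_lt_mul_of_pos_left (lt_of_lt_of_le hab (hF a)) hbpos
  rw [← Finset.sum_mul, (hne.1 j).2, one_mul, ← hself] at hlt
  exact lt_irrefl V hlt

lemma sep {σ : Fin m → Fin 3 → ℝ} (hprof : IsMixedProfile σ) (j : Fin m) (a b : Fin 3)
    (h : ∀ d : {i : Fin m // i ≠ j} → Fin 3, (∏ i, σ i.1 (d i)) ≠ 0 →
      imbPayoff (glue j b d) j + 1 ≤ imbPayoff (glue j a d) j) :
    F σ j b + 1 ≤ F σ j a := by
  have hw : ∀ d : {i : Fin m // i ≠ j} → Fin 3, 0 ≤ ∏ i, σ i.1 (d i) :=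
    fun d => Finset.prod_nonneg fun i _ => (hprof i.1).1 _
  have step : ∀ d : {i : Fin m // i ≠ j} → Fin 3,
      (∏ i, σ i.1 (d i)) * imbPayoff (glue j b d) j + (∏ i, σ i.1 (d i))
        ≤ (∏ i, σ i.1 (d i)) * imbPayoff (glue j a d) j := by
    intro d
    by_cases hz : (∏ i, σ i.1 (d i)) = 0
    · simp [hz]
    · nlinarith [h d hz, lt_of_le_of_ne (hw d) (Ne.symm hz)]
  calc F σ j b + 1
      = ∑ d : {i : Fin m // i ≠ j} → Fin 3,
          ((∏ i, σ i.1 (d i)) * imbPayoff (glue j b d) j + (∏ i, σ i.1 (d i))) := by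
        rw [Finset.sum_add_distrib, mass hprof j]; rfl
    _ ≤ F σ j a := Finset.sum_le_sum fun d _ => step d

end Imb
namespace Imb
variable {m : ℕ}

lemma fin3 (x : Fin 3) : x = 0 ∨ x = 1 ∨ x = 2 := by fin_cases x <;> simp

lemma w1 {c : Fin m → Fin 3} (h0 : ∃ i, c i = 0) (h2 : ∃ i, c i = 2) :
    imbWinner c = 0 := by
  unfold imbWinner; rw [if_pos ⟨h0, h2⟩]

lemma w2 {c : Fin m → Fin 3} (hn2 : ¬ ∃ i, c i = 2) (h1 : ∃ i, c i = 1) :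
    imbWinner c = 1 := by
  unfold imbWinner
  rw [if_neg (fun h => hn2 h.2)]
  by_cases h0 : ∃ i, c i = 0
  · rw [if_pos ⟨h0, h1⟩]
  · rw [if_neg (fun h => h0 h.1), if_neg h0, if_neg hn2]

lemma w5 {c : Fin m → Fin 3} (h2 : ∃ i, c i = 2) : imbWinner c ≠ 1 := by
  unfold imbWinner
  by_cases h0 : ∃ i, c i = 0
  · rw [if_pos ⟨h0, h2⟩]; decide
  · rw [if_neg (fun h => h0 h.1), if_neg (fun h => h0 h.1), if_neg h0, if_pos h2]; decide

lemma payoff_lose {c : Fin m → Fin 3} {j : Fin m} (h : c j ≠ imbWinner c) :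
    imbPayoff c j = -1 := by
  unfold imbPayoff; rw [if_neg h]

lemma payoff_win_nonneg {c : Fin m → Fin 3} {j : Fin m} (h : c j = imbWinner c) :
    0 ≤ imbPayoff c j := by
  unfold imbPayoff
  rw [if_pos h]
  apply div_nonneg _ (by positivity)
  have hle : (Finset.univ.filter (fun i => c i = imbWinner c)).card ≤ m := by
    simpa using Finset.card_le_univ (Finset.univ.filter (fun i => c i = imbWinner c))
  have : ((Finset.univ.filter (fun i => c i = imbWinner c)).card : ℝ) ≤ (m : ℝ) := by
    exact_mod_cast hle
  linarith

lemma payoff_unique_win {c : Fin m → Fin 3} {j : Fin m} (h : c j = imbWinner c)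
    (hu : ∀ i, i ≠ j → c i ≠ imbWinner c) : imbPayoff c j = (m : ℝ) - 1 := by
  unfold imbPayoff
  rw [if_pos h]
  have : Finset.univ.filter (fun i => c i = imbWinner c) = {j} := by
    ext i
    simp only [Finset.mem_filter, Finset.mem_univ, true_and, Finset.mem_singleton]
    constructor
    · intro hi; by_contra hij; exact hu i hij hi
    · intro hi; subst hi; exact h
  rw [this]; simp

lemma payoff_all_zero {c : Fin m → Fin 3} (hm : 0 < m) (hc : ∀ i, c i = 0) (j : Fin m) :
    imbPayoff c j = 0 := by
  have hw : imbWinner c = 0 := by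
    unfold imbWinner
    have h2 : ¬ ∃ i, c i = 2 := by rintro ⟨i, hi⟩; rw [hc i] at hi; exact absurd hi (by decide)
    have h1 : ¬ ∃ i, c i = 1 := by rintro ⟨i, hi⟩; rw [hc i] at hi; exact absurd hi (by decide)
    rw [if_neg (fun h => h2 h.2), if_neg (fun h => h1 h.2), if_pos ⟨j, hc j⟩]
  unfold imbPayoff
  rw [if_pos (by rw [hc j, hw])]
  have : Finset.univ.filter (fun i => c i = imbWinner c) = Finset.univ := by
    apply Finset.filter_true_of_mem; intro i _; rw [hc i, hw]
  rw [this]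
  simp
end Imb

/-- If at most one player `qs` can play `S` (object `2`), then in any Nash
equilibrium `qs` does not play `R` (object `0`); and if `qs` plays pure `S`,
the profile is not a Nash equilibrium. -/
theorem stmt_15 (m : ℕ) (hm : 2 ≤ m) (σ : Fin m → Fin 3 → ℝ)
    (hprof : IsMixedProfile σ) (qs : Fin m)
    (honly : ∀ i : Fin m, i ≠ qs → σ i 2 = 0) :
    (IsNashEq σ → σ qs 0 = 0) ∧
    (σ qs 2 = 1 → ¬ IsNashEq σ) := by
  have hmR : (2 : ℝ) ≤ (m : ℝ) := by exact_mod_cast hm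
  constructor
  · -- Claim 1
    intro hne
    refine Imb.key hne qs (a := 1) (b := 0) ?_
    have hsep : Imb.F σ qs 0 + 1 ≤ Imb.F σ qs 1 := by
      refine Imb.sep hprof qs 1 0 ?_
      intro d hz
      have hfac : ∀ i : {i : Fin m // i ≠ qs}, σ i.1 (d i) ≠ 0 := by
        intro i
        exact Finset.prod_ne_zero_iff.mp hz i (Finset.mem_univ i)
      have hd2 : ∀ i : {i : Fin m // i ≠ qs}, d i ≠ 2 := by
        intro i hdi
        exact hfac i (by rw [hdi]; exact honly i.1 i.2)
      have hn2 : ∀ a : Fin 3, a ≠ 2 → ¬ ∃ k, Imb.glue qs a d k = 2 := by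
        intro a ha
        rintro ⟨k, hk⟩
        by_cases hkq : k = qs
        · subst hkq; rw [Imb.glue_self] at hk; exact ha hk
        · rw [Imb.glue_ne hkq] at hk; exact hd2 ⟨k, hkq⟩ hk
      by_cases hall : ∀ i : {i : Fin m // i ≠ qs}, d i = 0
      · have hc0 : imbPayoff (Imb.glue qs 0 d) qs = 0 := by
          apply Imb.payoff_all_zero (by omega)
          intro i
          by_cases hkq : i = qs
          · subst hkq; exact Imb.glue_self
          · rw [Imb.glue_ne hkq]; exact hall ⟨i, hkq⟩
        have hw1 : imbWinner (Imb.glue qs 1 d) = 1 :=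
          Imb.w2 (hn2 1 (by decide)) ⟨qs, Imb.glue_self⟩
        have hc1 : imbPayoff (Imb.glue qs 1 d) qs = (m : ℝ) - 1 := by
          apply Imb.payoff_unique_win (by rw [Imb.glue_self, hw1])
          intro i hiq
          rw [Imb.glue_ne hiq, hall ⟨i, hiq⟩, hw1]
          decide
        rw [hc0, hc1]; linarith
      · push_neg at hall
        obtain ⟨i₀, hi₀⟩ := hall
        have hd1 : d i₀ = 1 := by
          rcases Imb.fin3 (d i₀) with h | h | h
          · exact absurd h hi₀
          · exact h
          · exact absurd h (hd2 i₀)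
        have hex1 : ∀ a : Fin 3, ∃ k, Imb.glue qs a d k = 1 :=
          fun a => ⟨i₀.1, by rw [Imb.glue_ne i₀.2, Subtype.coe_eta, hd1]⟩
        have hw0 : imbWinner (Imb.glue qs 0 d) = 1 := Imb.w2 (hn2 0 (by decide)) (hex1 0)
        have hw1 : imbWinner (Imb.glue qs 1 d) = 1 := Imb.w2 (hn2 1 (by decide)) (hex1 1)
        have hc0 : imbPayoff (Imb.glue qs 0 d) qs = -1 :=
          Imb.payoff_lose (by rw [Imb.glue_self, hw0]; decide)
        have hc1 : 0 ≤ imbPayoff (Imb.glue qs 1 d) qs :=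
          Imb.payoff_win_nonneg (by rw [Imb.glue_self, hw1])
        rw [hc0]; linarith
    linarith
  · -- Claim 2
    intro h2 hne
    have hq0 : σ qs 0 = 0 := by
      have hs := (hprof qs).2
      rw [Fin.sum_univ_three] at hs
      have := (hprof qs).1 0
      have := (hprof qs).1 1
      linarith [h2 ▸ hs]
    have hq1 : σ qs 1 = 0 := by
      have hs := (hprof qs).2
      rw [Fin.sum_univ_three] at hs
      have := (hprof qs).1 0
      have := (hprof qs).1 1
      linarith [h2 ▸ hs]
    -- Step A: every opponent plays pure R in equilibrium
    have hopp1 : ∀ i : Fin m, i ≠ qs → σ i 1 = 0 := by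
      intro i hiq
      refine Imb.key hne i (a := 0) (b := 1) ?_
      have hsep : Imb.F σ i 1 + 1 ≤ Imb.F σ i 0 := by
        refine Imb.sep hprof i 0 1 ?_
        intro d hz
        have hfac : ∀ k : {k : Fin m // k ≠ i}, σ k.1 (d k) ≠ 0 := by
          intro k
          exact Finset.prod_ne_zero_iff.mp hz k (Finset.mem_univ k)
        have hqs' : qs ≠ i := fun h => hiq h.symm
        have hdq : d ⟨qs, hqs'⟩ = 2 := by
          rcases Imb.fin3 (d ⟨qs, hqs'⟩) with h | h | h
          · exact absurd (by rw [h]; exact hq0) (hfac ⟨qs, hqs'⟩)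
          · exact absurd (by rw [h]; exact hq1) (hfac ⟨qs, hqs'⟩)
          · exact h
        have hex2 : ∀ a : Fin 3, ∃ k, Imb.glue i a d k = 2 :=
          fun a => ⟨qs, by rw [Imb.glue_ne hqs']; exact hdq⟩
        have hw0 : imbWinner (Imb.glue i 0 d) = 0 :=
          Imb.w1 ⟨i, Imb.glue_self⟩ (hex2 0)
        have hc0 : 0 ≤ imbPayoff (Imb.glue i 0 d) i :=
          Imb.payoff_win_nonneg (by rw [Imb.glue_self, hw0])
        have hc1 : imbPayoff (Imb.glue i 1 d) i = -1 := by
          apply Imb.payoff_lose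
          rw [Imb.glue_self]
          exact fun h => Imb.w5 (hex2 1) h.symm
        rw [hc1]; linarith
      linarith
    have hopp0 : ∀ i : Fin m, i ≠ qs → σ i 0 = 1 := by
      intro i hiq
      have hs := (hprof i).2
      rw [Fin.sum_univ_three] at hs
      rw [hopp1 i hiq, honly i hiq] at hs
      linarith
    -- Step C: qs should deviate from S to P
    have : σ qs 2 = 0 := by
      refine Imb.key hne qs (a := 1) (b := 2) ?_
      have hsep : Imb.F σ qs 2 + 1 ≤ Imb.F σ qs 1 := by
        refine Imb.sep hprof qs 1 2 ?_
        intro d hz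
        have hfac : ∀ k : {k : Fin m // k ≠ qs}, σ k.1 (d k) ≠ 0 := by
          intro k
          exact Finset.prod_ne_zero_iff.mp hz k (Finset.mem_univ k)
        have hall : ∀ k : {k : Fin m // k ≠ qs}, d k = 0 := by
          intro k
          rcases Imb.fin3 (d k) with h | h | h
          · exact h
          · exact absurd (by rw [h]; exact hopp1 k.1 k.2) (hfac k)
          · exact absurd (by rw [h]; exact honly k.1 k.2) (hfac k)
        have hnt : Nontrivial (Fin m) := Fin.nontrivial_iff_two_le.mpr hm
        obtain ⟨i₀, hi₀⟩ := exists_ne qs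
        have hex0 : ∀ a : Fin 3, a ≠ 0 → ∃ k, Imb.glue qs a d k = 0 :=
          fun a _ => ⟨i₀, by rw [Imb.glue_ne hi₀]; exact hall ⟨i₀, hi₀⟩⟩
        have hw2 : imbWinner (Imb.glue qs 2 d) = 0 :=
          Imb.w1 (hex0 2 (by decide)) ⟨qs, Imb.glue_self⟩
        have hc2 : imbPayoff (Imb.glue qs 2 d) qs = -1 :=
          Imb.payoff_lose (by rw [Imb.glue_self, hw2]; decide)
        have hn2 : ¬ ∃ k, Imb.glue qs 1 d k = 2 := by
          rintro ⟨k, hk⟩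
          by_cases hkq : k = qs
          · subst hkq; rw [Imb.glue_self] at hk; exact absurd hk (by decide)
          · rw [Imb.glue_ne hkq, hall ⟨k, hkq⟩] at hk; exact absurd hk (by decide)
        have hw1 : imbWinner (Imb.glue qs 1 d) = 1 :=
          Imb.w2 hn2 ⟨qs, Imb.glue_self⟩
        have hc1 : imbPayoff (Imb.glue qs 1 d) qs = (m : ℝ) - 1 := by
          apply Imb.payoff_unique_win (by rw [Imb.glue_self, hw1])
          intro k hkq
          rw [Imb.glue_ne hkq, hall ⟨k, hkq⟩, hw1]
          decide
        rw [hc1, hc2]; linarith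
      linarith
    rw [this] at h2
    exact one_ne_zero h2.symm
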